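/- Fix r₀ > 0 and define μ : [0,∞) → ℝ by μ(t) = arccosh( cosh²(r₀) − sinh²(r₀)·cos( min{π, t/sinh(r₀)} ) ). Then μ is non-decreasing, continuous and concave on [0,∞), and μ is subadditive: for all t, t' ≥ 0, μ(t + t') ≤ μ(t) + μ(t'). -/

import Mathlib

/-- The inverse hyperbolic cosine, defined (for `x ≥ 1`) by
`arcosh x = log (x + sqrt (x² − 1))`. -/
noncomputable def arcosh (x : ℝ) : ℝ :=
  Real.log (x + Real.sqrt (x ^ 2 - 1))

/-- The comparison function `μ` for the hyperbolic cone of radius `r₀`: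
`μ(t) = arcosh( cosh²r₀ − sinh²r₀ · cos(min{π, t/sinh r₀}) )`. -/
noncomputable def mucone (r₀ t : ℝ) : ℝ :=
  arcosh (Real.cosh r₀ ^ 2 -
    Real.sinh r₀ ^ 2 * Real.cos (min Real.pi (t / Real.sinh r₀)))

open Real Set

lemma arcosh_one_add_two_sq {x : ℝ} (hx : 0 ≤ x) :
    _root_.arcosh (1 + 2 * x ^ 2) = 2 * Real.arsinh x := by
  have h1 : (1 + 2 * x ^ 2) ^ 2 - 1 = (2 * x) ^ 2 * (1 + x ^ 2) := by ring
  have hsq : Real.sqrt (1 + x ^ 2) ^ 2 = 1 + x ^ 2 := Real.sq_sqrt (by positivity)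
  rw [_root_.arcosh, Real.arsinh, h1, Real.sqrt_mul (by positivity) , Real.sqrt_sq (by positivity)]
  rw [show (2:ℝ) * Real.log (x + Real.sqrt (1 + x ^ 2))
      = Real.log ((x + Real.sqrt (1 + x ^ 2)) ^ 2) by rw [Real.log_pow]; push_cast; ring]
  congr 1
  nlinarith [hsq]

lemma concaveOn_comp_mono {S T : Set ℝ} {f g : ℝ → ℝ} (hf : ConcaveOn ℝ T f)
    (hg : ConcaveOn ℝ S g) (hmap : Set.MapsTo g S T) (hmono : MonotoneOn f T) :
    ConcaveOn ℝ S (fun x => f (g x)) := by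
  refine ⟨hg.1, fun x hx y hy a b ha hb hab => ?_⟩
  have h1 : a • g x + b • g y ∈ T := hf.1 (hmap hx) (hmap hy) ha hb hab
  have h2 : g (a • x + b • y) ∈ T := hmap (hg.1 hx hy ha hb hab)
  calc a • f (g x) + b • f (g y) ≤ f (a • g x + b • g y) := hf.2 (hmap hx) (hmap hy) ha hb hab
    _ ≤ f (g (a • x + b • y)) := hmono h1 h2 (hg.2 hx hy ha hb hab)

lemma concaveOn_const_mul {c : ℝ} (hc : 0 ≤ c) {S : Set ℝ} {f : ℝ → ℝ}
    (hf : ConcaveOn ℝ S f) : ConcaveOn ℝ S (fun x => c * f x) :=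
  hf.smul hc

lemma concaveOn_arsinh : ConcaveOn ℝ (Set.Ici (0 : ℝ)) Real.arsinh := by
  apply AntitoneOn.concaveOn_of_deriv (convex_Ici 0)
    Real.continuous_arsinh.continuousOn Real.differentiable_arsinh.differentiableOn
  have hd : deriv Real.arsinh = fun x => (Real.sqrt (1 + x ^ 2))⁻¹ :=
    funext fun x => (Real.hasDerivAt_arsinh x).deriv
  rw [hd]
  intro x hx y hy hxy
  simp only [interior_Ici, Set.mem_Ioi] at hx hy
  have h1 : Real.sqrt (1 + x ^ 2) ≤ Real.sqrt (1 + y ^ 2) :=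
    Real.sqrt_le_sqrt (by nlinarith)
  have h2 : 0 < Real.sqrt (1 + x ^ 2) := Real.sqrt_pos.2 (by positivity)
  exact inv_anti₀ h2 h1

lemma concaveOn_subadditive {f : ℝ → ℝ} (hf : ConcaveOn ℝ (Set.Ici (0 : ℝ)) f)
    (h0 : 0 ≤ f 0) : ∀ t t' : ℝ, 0 ≤ t → 0 ≤ t' → f (t + t') ≤ f t + f t' := by
  have key : ∀ u v : ℝ, 0 ≤ u → 0 ≤ v → 0 < u + v →
      (u / (u + v)) * f (u + v) + (v / (u + v)) * f 0 ≤ f u := by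
    intro u v hu hv huv
    have h := hf.2 (show (u + v) ∈ Set.Ici (0:ℝ) from Set.mem_Ici.2 huv.le)
      (show (0:ℝ) ∈ Set.Ici (0:ℝ) from Set.mem_Ici.2 le_rfl)
      (div_nonneg hu huv.le) (div_nonneg hv huv.le)
      (by field_simp)
    have harg : (u / (u + v)) • (u + v) + (v / (u + v)) • (0:ℝ) = u := by
      rw [smul_eq_mul, smul_eq_mul, mul_zero, add_zero, div_mul_cancel₀ _ huv.ne']
    rw [harg] at h
    simpa [smul_eq_mul] using h
  intro t t' ht ht'
  rcases eq_or_lt_of_le (by linarith : (0:ℝ) ≤ t + t') with h | h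
  · have ht0 : t = 0 := by linarith
    have ht'0 : t' = 0 := by linarith
    simp [ht0, ht'0]
    linarith
  · have k1 := key t t' ht ht' h
    have k2 := key t' t ht' ht (by linarith)
    rw [show t' + t = t + t' by ring] at k2
    have hsum : t / (t + t') + t' / (t + t') = 1 := by field_simp
    have e1 : (t / (t + t') + t' / (t + t')) * f (t + t') = f (t + t') := by
      rw [hsum, one_mul]
    have e2 : (t / (t + t') + t' / (t + t')) * f 0 = f 0 := by rw [hsum, one_mul]
    nlinarith [k1, k2, h0, e1, e2]

lemma mucone_eq (r₀ : ℝ) (hr₀ : 0 < r₀) {t : ℝ} (ht : 0 ≤ t) :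
    mucone r₀ t =
      2 * Real.arsinh (Real.sinh r₀ * Real.sin (min Real.pi (t / Real.sinh r₀) / 2)) := by
  have hs : 0 < Real.sinh r₀ := Real.sinh_pos_iff.2 hr₀
  set θ := min Real.pi (t / Real.sinh r₀) with hθ
  have hθ0 : 0 ≤ θ := le_min Real.pi_pos.le (div_nonneg ht hs.le)
  have hθπ : θ ≤ Real.pi := min_le_left _ _
  have hsin : 0 ≤ Real.sin (θ / 2) :=
    Real.sin_nonneg_of_nonneg_of_le_pi (by linarith) (by linarith [Real.pi_pos])
  have hcos : Real.cos θ = 1 - 2 * Real.sin (θ / 2) ^ 2 := by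
    have h := Real.cos_two_mul (θ / 2)
    have h2 := Real.sin_sq_add_cos_sq (θ / 2)
    rw [show 2 * (θ / 2) = θ by ring] at h
    linarith
  have harg : Real.cosh r₀ ^ 2 - Real.sinh r₀ ^ 2 * Real.cos θ =
      1 + 2 * (Real.sinh r₀ * Real.sin (θ / 2)) ^ 2 := by
    have h2 := Real.cosh_sq r₀
    rw [hcos]; ring_nf; nlinarith [h2]
  rw [mucone, ← hθ, harg, arcosh_one_add_two_sq (by positivity)]

theorem mucone_monotone_continuous_concave_subadditive
    (r₀ : ℝ) (hr₀ : 0 < r₀) :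
    MonotoneOn (mucone r₀) (Set.Ici (0 : ℝ)) ∧
    ContinuousOn (mucone r₀) (Set.Ici (0 : ℝ)) ∧
    ConcaveOn ℝ (Set.Ici (0 : ℝ)) (mucone r₀) ∧
    ∀ t t' : ℝ, 0 ≤ t → 0 ≤ t' →
      mucone r₀ (t + t') ≤ mucone r₀ t + mucone r₀ t' := by
  have hs : 0 < Real.sinh r₀ := Real.sinh_pos_iff.2 hr₀
  set s := Real.sinh r₀ with hsdef
  set g : ℝ → ℝ := fun t => 2 * Real.arsinh (s * Real.sin (min Real.pi (t / s) / 2)) with hg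
  have heq : Set.EqOn (mucone r₀) g (Set.Ici 0) := fun t ht => mucone_eq r₀ hr₀ ht
  -- basic facts about the inner angle
  have hmem : ∀ t : ℝ, 0 ≤ t → min Real.pi (t / s) / 2 ∈ Set.Icc 0 (Real.pi / 2) := by
    intro t ht
    constructor
    · have : 0 ≤ min Real.pi (t / s) := le_min Real.pi_pos.le (div_nonneg ht hs.le)
      linarith
    · have : min Real.pi (t / s) ≤ Real.pi := min_le_left _ _
      linarith
  have hsinmono : MonotoneOn Real.sin (Set.Icc 0 (Real.pi / 2)) :=
    Real.strictMonoOn_sin.monotoneOn.mono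
      (Set.Icc_subset_Icc (by linarith [Real.pi_pos]) le_rfl)
  have hargmono : ∀ {x y : ℝ}, x ≤ y →
      min Real.pi (x / s) / 2 ≤ min Real.pi (y / s) / 2 := by
    intro x y hxy
    have : x / s ≤ y / s := by gcongr
    have := min_le_min (le_refl Real.pi) this
    linarith
  have hsinnn : ∀ t : ℝ, 0 ≤ t → 0 ≤ Real.sin (min Real.pi (t / s) / 2) := by
    intro t ht
    obtain ⟨h1, h2⟩ := hmem t ht
    exact Real.sin_nonneg_of_nonneg_of_le_pi h1 (by linarith [Real.pi_pos])
  -- monotonicity of g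
  have gmono : MonotoneOn g (Set.Ici (0 : ℝ)) := by
    intro x hx y hy hxy
    simp only [hg]
    have hsin : Real.sin (min Real.pi (x / s) / 2) ≤ Real.sin (min Real.pi (y / s) / 2) :=
      hsinmono (hmem x hx) (hmem y hy) (hargmono hxy)
    have : s * Real.sin (min Real.pi (x / s) / 2) ≤ s * Real.sin (min Real.pi (y / s) / 2) := by
      gcongr
    have := Real.arsinh_le_arsinh.2 this
    linarith
  -- continuity of g
  have gcont : Continuous g := by
    apply Continuous.mul continuous_const
    apply Real.continuous_arsinh.comp
    apply Continuous.mul continuous_const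
    exact Real.continuous_sin.comp ((continuous_const.min (continuous_id.div_const s)).div_const 2)
  -- concavity of g
  have step1 : ConcaveOn ℝ (Set.Ici (0:ℝ)) (fun t : ℝ => min Real.pi (t / s) / 2) := by
    refine ⟨convex_Ici 0, fun x hx y hy a b ha hb hab => ?_⟩
    simp only [smul_eq_mul]
    have key : a * min Real.pi (x / s) + b * min Real.pi (y / s) ≤
        min Real.pi ((a * x + b * y) / s) := by
      apply le_min
      · have h1 : min Real.pi (x / s) ≤ Real.pi := min_le_left _ _
        have h2 : min Real.pi (y / s) ≤ Real.pi := min_le_left _ _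
        have e1 := mul_le_mul_of_nonneg_left h1 ha
        have e2 := mul_le_mul_of_nonneg_left h2 hb
        have e3 : a * Real.pi + b * Real.pi = Real.pi := by
          rw [← add_mul, hab, one_mul]
        linarith
      · have h1 : min Real.pi (x / s) ≤ x / s := min_le_right _ _
        have h2 : min Real.pi (y / s) ≤ y / s := min_le_right _ _
        have : a * (x / s) + b * (y / s) = (a * x + b * y) / s := by ring
        have e1 := mul_le_mul_of_nonneg_left h1 ha
        have e2 := mul_le_mul_of_nonneg_left h2 hb
        linarith
    linarith
  have hmap1 : Set.MapsTo (fun t : ℝ => min Real.pi (t / s) / 2) (Set.Ici (0:ℝ))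
      (Set.Icc (0:ℝ) (Real.pi / 2)) := fun t ht => hmem t ht
  have hsinconc : ConcaveOn ℝ (Set.Icc (0:ℝ) (Real.pi / 2)) Real.sin :=
    strictConcaveOn_sin_Icc.concaveOn.subset
      (Set.Icc_subset_Icc le_rfl (by linarith [Real.pi_pos])) (convex_Icc _ _)
  have step3 : ConcaveOn ℝ (Set.Ici (0:ℝ))
      (fun t : ℝ => Real.sin (min Real.pi (t / s) / 2)) :=
    concaveOn_comp_mono hsinconc step1 hmap1 hsinmono
  have step4 : ConcaveOn ℝ (Set.Ici (0:ℝ))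
      (fun t : ℝ => s * Real.sin (min Real.pi (t / s) / 2)) :=
    concaveOn_const_mul hs.le step3
  have hmap2 : Set.MapsTo (fun t : ℝ => s * Real.sin (min Real.pi (t / s) / 2))
      (Set.Ici (0:ℝ)) (Set.Ici (0:ℝ)) := fun t ht =>
    Set.mem_Ici.2 (mul_nonneg hs.le (hsinnn t ht))
  have harsinhmono : MonotoneOn Real.arsinh (Set.Ici (0:ℝ)) :=
    fun _ _ _ _ h => Real.arsinh_le_arsinh.2 h
  have step5 : ConcaveOn ℝ (Set.Ici (0:ℝ))
      (fun t : ℝ => Real.arsinh (s * Real.sin (min Real.pi (t / s) / 2))) :=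
    concaveOn_comp_mono concaveOn_arsinh step4 hmap2 harsinhmono
  have gconc : ConcaveOn ℝ (Set.Ici (0:ℝ)) g :=
    concaveOn_const_mul (by norm_num) step5
  -- transfer to mucone
  have mono : MonotoneOn (mucone r₀) (Set.Ici (0:ℝ)) := fun x hx y hy hxy => by
    rw [heq hx, heq hy]; exact gmono hx hy hxy
  have cont : ContinuousOn (mucone r₀) (Set.Ici (0:ℝ)) :=
    gcont.continuousOn.congr heq
  have conc : ConcaveOn ℝ (Set.Ici (0:ℝ)) (mucone r₀) := by
    refine ⟨convex_Ici 0, fun x hx y hy a b ha hb hab => ?_⟩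
    rw [heq hx, heq hy, heq ((convex_Ici 0) hx hy ha hb hab)]
    exact gconc.2 hx hy ha hb hab
  have h0 : mucone r₀ 0 = 0 := by
    rw [heq (Set.mem_Ici.2 le_rfl)]
    simp only [hg]
    rw [zero_div, min_eq_right Real.pi_pos.le, zero_div, Real.sin_zero, mul_zero,
      Real.arsinh_zero, mul_zero]
  exact ⟨mono, cont, conc, concaveOn_subadditive conc (by rw [h0])⟩
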